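/- Assume n ≥ 1 and let D : A → A be a k-linear map satisfying the graded Leibniz rule with D(x_i) = x_1 * x_i for all i ∈ Fin n. For m ≥ 1, consider the k-vector space V of polynomials homogeneous of degree 2m (together with 0) and its subspace W = { D g | g ∈ A homogeneous of degree 2m−1 } (together with 0). Then the quotient vector space V/W has finite dimension equal to the number of monomials of degree 2m in n−1 variables, namely Nat.choose (2m + n − 2) (2m). -/

import Mathlib

open MvPolynomial

section aux

variable {k : Type*} [Field k] {n : ℕ}

lemma aux_D_one (D : MvPolynomial (Fin n) k →ₗ[k] MvPolynomial (Fin n) k)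
    (hLeib : ∀ (d : ℕ) (a b : MvPolynomial (Fin n) k), a.IsHomogeneous d →
      D (a * b) = D a * b + ((-1 : k) ^ d) • (a * D b)) : D 1 = 0 := by
  have h := hLeib 0 1 1 (isHomogeneous_one _ _)
  simp only [mul_one, one_mul, pow_zero, one_smul] at h
  exact (left_eq_add.mp h)

lemma aux_D_monomial (hn : 1 ≤ n) (D : MvPolynomial (Fin n) k →ₗ[k] MvPolynomial (Fin n) k)
    (hLeib : ∀ (d : ℕ) (a b : MvPolynomial (Fin n) k), a.IsHomogeneous d →
      D (a * b) = D a * b + ((-1 : k) ^ d) • (a * D b))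
    (hD : ∀ i : Fin n, D (X i) = X ⟨0, hn⟩ * X i) :
    ∀ (d : ℕ) (s : Fin n →₀ ℕ), Finsupp.degree s = d →
      D (monomial s 1) = if Odd d then X ⟨0, hn⟩ * monomial s 1 else 0 := by
  intro d
  induction d with
  | zero =>
    intro s hs
    rw [Finsupp.degree_eq_zero_iff] at hs
    subst hs
    simp [monomial_zero', aux_D_one D hLeib]
  | succ d ih =>
    intro s hs
    obtain ⟨i, hi⟩ : ∃ i, s i ≠ 0 := by
      by_contra h
      push_neg at h
      have : s = 0 := Finsupp.ext fun i => h i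
      subst this
      simp [map_zero] at hs
    have h1 : 1 ≤ s i := Nat.one_le_iff_ne_zero.mpr hi
    set s' := s - Finsupp.single i 1 with hs'def
    have hsum : Finsupp.single i 1 + s' = s := by
      ext j
      simp only [hs'def, Finsupp.add_apply, Finsupp.tsub_apply, Finsupp.single_apply]
      rcases eq_or_ne i j with rfl | hij
      · rw [if_pos rfl]
        omega
      · simp [hij]
    have hdeg' : Finsupp.degree s' = d := by
      have hadd : Finsupp.degree (Finsupp.single i 1 + s')
          = Finsupp.degree (Finsupp.single i 1) + Finsupp.degree s' := by
        simp [Finsupp.degree_eq_weight_one, map_add]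
      have hone : Finsupp.degree (Finsupp.single i (1 : ℕ)) = 1 := by
        exact Finsupp.degree_single i 1
      rw [hsum, hs, hone] at hadd
      omega
    have hmon : (monomial s (1 : k)) = X i * monomial s' 1 := by
      rw [X, monomial_mul, one_mul, hsum]
    rw [hmon, hLeib 1 (X i) _ (isHomogeneous_X _ _), hD i, ih s' hdeg', pow_one, neg_one_smul]
    rcases Nat.even_or_odd d with he | ho
    · rw [if_neg (by simpa using he), if_pos (Even.add_one he)]
      rw [mul_zero, neg_zero, add_zero, mul_assoc]
    · have hnotodd : ¬ Odd (d + 1) := by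
        simpa [Nat.even_add_one] using ho
      rw [if_pos ho, if_neg hnotodd]
      ring
end aux

section aux2

variable {k : Type*} [Field k] {n : ℕ}

lemma aux_D_hom (hn : 1 ≤ n) (D : MvPolynomial (Fin n) k →ₗ[k] MvPolynomial (Fin n) k)
    (hLeib : ∀ (d : ℕ) (a b : MvPolynomial (Fin n) k), a.IsHomogeneous d →
      D (a * b) = D a * b + ((-1 : k) ^ d) • (a * D b))
    (hD : ∀ i : Fin n, D (X i) = X ⟨0, hn⟩ * X i)
    {d : ℕ} {g : MvPolynomial (Fin n) k} (hg : g.IsHomogeneous d) :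
    D g = if Odd d then X ⟨0, hn⟩ * g else 0 := by
  have key : ∀ s ∈ g.support, D (monomial s (coeff s g)) =
      if Odd d then X ⟨0, hn⟩ * monomial s (coeff s g) else 0 := by
    intro s hs
    have hdeg : Finsupp.degree s = d := by
      have := hg (mem_support_iff.mp hs)
      rwa [Finsupp.degree_eq_weight_one]
    have hsm : monomial s (coeff s g) = (coeff s g) • monomial s 1 := by
      rw [smul_monomial, smul_eq_mul, mul_one]
    rw [hsm, map_smul, aux_D_monomial hn D hLeib hD d s hdeg]
    split_ifs with h
    · rw [mul_smul_comm]
    · simp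
  split_ifs with h
  · conv_lhs => rw [g.as_sum]
    conv_rhs => rw [g.as_sum, Finset.mul_sum]
    rw [map_sum]
    refine Finset.sum_congr rfl fun s hs => ?_
    rw [key s hs, if_pos h]
  · conv_lhs => rw [g.as_sum]
    rw [map_sum]
    refine Finset.sum_eq_zero fun s hs => ?_
    rw [key s hs, if_neg h]

end aux2

section count

/-- Equivalence between degree-`N` exponent vectors and `Sym (Fin n) N`. -/
noncomputable def degreeSymEquiv (n N : ℕ) :
    {d : Fin n →₀ ℕ | Finsupp.degree d = N} ≃ Sym (Fin n) N where
  toFun d := ⟨Finsupp.toMultiset d.1, by rw [Finsupp.card_toMultiset]; exact d.2⟩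
  invFun s := ⟨Multiset.toFinsupp s.1, by
    have h : Finsupp.degree (Multiset.toFinsupp s.1) = Multiset.card s.1 :=
      Multiset.toFinsupp_sum_eq s.1
    show Finsupp.degree (Multiset.toFinsupp s.1) = N
    rw [h, s.2]⟩
  left_inv d := Subtype.ext (Finsupp.toMultiset_toFinsupp d.1)
  right_inv s := Subtype.ext (Multiset.toFinsupp_toMultiset s.1)

noncomputable instance degreeFintype (n N : ℕ) :
    Fintype {d : Fin n →₀ ℕ | Finsupp.degree d = N} :=
  Fintype.ofEquiv _ (degreeSymEquiv n N).symm

lemma card_degree (n N : ℕ) :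
    Fintype.card {d : Fin n →₀ ℕ | Finsupp.degree d = N} = (n + N - 1).choose N := by
  rw [Fintype.card_congr (degreeSymEquiv n N), Sym.card_sym_eq_multichoose,
    Fintype.card_fin, Nat.multichoose_eq]

variable (k : Type*) [Field k]

noncomputable def homBasis (n N : ℕ) :
    Module.Basis {d : Fin n →₀ ℕ | Finsupp.degree d = N} k
      (homogeneousSubmodule (Fin n) k N) :=
  (basisRestrictSupport k {d : Fin n →₀ ℕ | Finsupp.degree d = N}).map
    (LinearEquiv.ofEq _ _
      (homogeneousSubmodule_eq_finsupp_supported (σ := Fin n) (R := k) N).symm)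

lemma hom_findim (n N : ℕ) : FiniteDimensional k (homogeneousSubmodule (Fin n) k N) :=
  Module.Finite.of_basis (homBasis k n N)

lemma hom_finrank (n N : ℕ) :
    Module.finrank k (homogeneousSubmodule (Fin n) k N) = (n + N - 1).choose N := by
  rw [Module.finrank_eq_card_basis (homBasis k n N)]
  exact card_degree n N

end count

set_option maxHeartbeats 1000000 in
set_option synthInstance.maxHeartbeats 200000 in
theorem stmt_8 (k : Type*) [Field k] [CharZero k] (n : ℕ) (hn : 1 ≤ n)
    (D : MvPolynomial (Fin n) k →ₗ[k] MvPolynomial (Fin n) k)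
    (hLeib : ∀ (d : ℕ) (a b : MvPolynomial (Fin n) k), a.IsHomogeneous d →
      D (a * b) = D a * b + ((-1 : k) ^ d) • (a * D b))
    (hD : ∀ i : Fin n, D (X i) = X ⟨0, hn⟩ * X i)
    (m : ℕ) (hm : 1 ≤ m)
    (V : Submodule k (MvPolynomial (Fin n) k))
    (hV : V = homogeneousSubmodule (Fin n) k (2 * m))
    (W : Submodule k V)
    (hW : W = (Submodule.map D (homogeneousSubmodule (Fin n) k (2 * m - 1))).comap V.subtype) :
    FiniteDimensional k (V ⧸ W) ∧
      Module.finrank k (V ⧸ W) = Nat.choose (2 * m + n - 2) (2 * m) := by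
  subst hV
  subst hW
  have hX0 : (X ⟨0, hn⟩ : MvPolynomial (Fin n) k) ≠ 0 := X_ne_zero _
  set L : MvPolynomial (Fin n) k →ₗ[k] MvPolynomial (Fin n) k :=
    LinearMap.mulLeft k (X ⟨0, hn⟩) with hLdef
  have hodd : Odd (2 * m - 1) := ⟨m - 1, by omega⟩
  have hDL : ∀ g ∈ homogeneousSubmodule (Fin n) k (2 * m - 1), D g = L g := by
    intro g hg
    rw [aux_D_hom hn D hLeib hD ((mem_homogeneousSubmodule _ _).mp hg), if_pos hodd]
    rfl
  have hmap : Submodule.map D (homogeneousSubmodule (Fin n) k (2 * m - 1))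
      = Submodule.map L (homogeneousSubmodule (Fin n) k (2 * m - 1)) := by
    ext x
    simp only [Submodule.mem_map]
    constructor
    · rintro ⟨g, hg, rfl⟩; exact ⟨g, hg, (hDL g hg).symm⟩
    · rintro ⟨g, hg, rfl⟩; exact ⟨g, hg, hDL g hg⟩
  have hle : Submodule.map L (homogeneousSubmodule (Fin n) k (2 * m - 1))
      ≤ homogeneousSubmodule (Fin n) k (2 * m) := by
    rintro x ⟨g, hg, rfl⟩
    have hhom := (isHomogeneous_X k (⟨0, hn⟩ : Fin n)).mul
      ((mem_homogeneousSubmodule _ _).mp hg)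
    rw [show 1 + (2 * m - 1) = 2 * m by omega] at hhom
    exact hhom
  have hle' : Submodule.map D (homogeneousSubmodule (Fin n) k (2 * m - 1))
      ≤ homogeneousSubmodule (Fin n) k (2 * m) := hmap ▸ hle
  have hLinj : Function.Injective L := by
    intro a b hab
    simp only [hLdef, LinearMap.mulLeft_apply] at hab
    exact mul_left_cancel₀ hX0 hab
  haveI : FiniteDimensional k (homogeneousSubmodule (Fin n) k (2 * m)) :=
    hom_findim k n (2 * m)
  haveI : FiniteDimensional k (homogeneousSubmodule (Fin n) k (2 * m - 1)) :=
    hom_findim k n (2 * m - 1)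
  have e1 := Submodule.comapSubtypeEquivOfLe hle'
  have e2 := (Submodule.equivMapOfInjective L hLinj
    (homogeneousSubmodule (Fin n) k (2 * m - 1))).symm
  have hrankW : Module.finrank k
      ((Submodule.map D (homogeneousSubmodule (Fin n) k (2 * m - 1))).comap
        (homogeneousSubmodule (Fin n) k (2 * m)).subtype)
      = Module.finrank k (homogeneousSubmodule (Fin n) k (2 * m - 1)) := by
    rw [e1.finrank_eq, hmap, e2.finrank_eq]
  have hq := Submodule.finrank_quotient_add_finrank
    ((Submodule.map D (homogeneousSubmodule (Fin n) k (2 * m - 1))).comap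
      (homogeneousSubmodule (Fin n) k (2 * m)).subtype)
  have hV' : Module.finrank k (homogeneousSubmodule (Fin n) k (2 * m))
      = (n + 2 * m - 1).choose (2 * m) := by
    rw [hom_finrank k n (2 * m)]
  have hH' : Module.finrank k (homogeneousSubmodule (Fin n) k (2 * m - 1))
      = (n + 2 * m - 2).choose (2 * m - 1) := by
    rw [hom_finrank k n (2 * m - 1)]
    congr 1
    omega
  have pascal : (n + 2 * m - 1).choose (2 * m)
      = (n + 2 * m - 2).choose (2 * m - 1) + (n + 2 * m - 2).choose (2 * m) := by
    have h1 : n + 2 * m - 1 = (n + 2 * m - 2) + 1 := by omega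
    have h2 : 2 * m = (2 * m - 1) + 1 := by omega
    rw [h1, h2, Nat.choose_succ_succ, Nat.succ_eq_add_one, ← h2]
  have htarget : (n + 2 * m - 2).choose (2 * m) = (2 * m + n - 2).choose (2 * m) := by
    congr 1
    omega
  refine ⟨inferInstance, ?_⟩
  omega
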